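/- arXiv:1805.07051 — 3 statements merged into one kernel-verified Lean document; each statement's English description precedes it below -/
import Mathlib

section
/- For any λ > 0 and any real z, the integral over s ∈ (0,∞) of (1/√(2πs)) · exp(−z²/(2s)) · (λ²/2) · exp(−λ²s/2) ds equals (λ/2) · exp(−λ|z|). That is, the Laplace density is a scale mixture of centered Gaussian densities with exponential mixing distribution on the variance. -/
open MeasureTheory Real
open Set

lemma gauss_univ : ∫ v : ℝ, Real.exp (-(v ^ 2) / 2) = Real.sqrt (2 * Real.pi) := by
  have h := integral_gaussian (1/2 : ℝ)
  rw [show (π / (1/2 : ℝ)) = 2 * π by ring] at h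
  rw [← h]
  congr 1; ext v; ring_nf

set_option maxHeartbeats 1000000 in
lemma Jval (b c : ℝ) (hb : 0 < b) (hc : 0 ≤ c) :
    ∫ u in Ioi (0:ℝ), Real.exp (-(b * u - c / u) ^ 2 / 2) = Real.sqrt (2 * Real.pi) / (2 * b) := by
  rcases eq_or_lt_of_le hc with hc0 | hc0
  · -- c = 0
    subst hc0
    have h := integral_gaussian_Ioi (b ^ 2 / 2)
    rw [show π / (b ^ 2 / 2) = 2 * π / b ^ 2 by ring,
      Real.sqrt_div (by positivity) (b ^ 2), Real.sqrt_sq hb.le] at h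
    rw [show Real.sqrt (2 * π) / (2 * b) = Real.sqrt (2 * π) / b / 2 by ring, ← h]
    apply setIntegral_congr_fun measurableSet_Ioi
    intro x hx
    dsimp only
    rw [zero_div, sub_zero]
    congr 1
    ring
  · -- c > 0
    set φ : ℝ → ℝ := fun u => b * u - c / u with hφ
    set φ' : ℝ → ℝ := fun u => b + c / u ^ 2 with hφ'
    have hderiv : ∀ x ∈ Ioi (0:ℝ), HasDerivWithinAt φ (φ' x) (Ioi 0) x := by
      intro x hx
      have hx0 : x ≠ 0 := ne_of_gt hx
      have h0 : HasDerivAt (fun u : ℝ => b * u - c * u⁻¹) (b * 1 - c * (-(x^2)⁻¹)) x :=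
        ((hasDerivAt_id x).const_mul b).sub ((hasDerivAt_inv hx0).const_mul c)
      have h1 : HasDerivAt (fun u : ℝ => b * u - c / u) (b + c / x ^ 2) x := by
        simp only [div_eq_mul_inv]
        convert h0 using 1
        field_simp
        ring
      exact h1.hasDerivWithinAt
    have hmono : StrictMonoOn φ (Ioi 0) := by
      intro x hx y hy hxy
      simp only [hφ, mem_Ioi] at *
      have : c / y ≤ c / x := div_le_div_of_nonneg_left hc hx hxy.le
      nlinarith
    have hinj : InjOn φ (Ioi 0) := hmono.injOn
    have himg : φ '' Ioi 0 = univ := by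
      apply eq_univ_of_forall
      intro v
      have hD : 0 < v ^ 2 + 4 * b * c := by nlinarith
      have hsq : Real.sqrt (v ^ 2 + 4 * b * c) ^ 2 = v ^ 2 + 4 * b * c :=
        Real.sq_sqrt hD.le
      have hgt : |v| < Real.sqrt (v ^ 2 + 4 * b * c) := by
        have : |v| = Real.sqrt (v ^ 2) := (Real.sqrt_sq_eq_abs v).symm
        rw [this]
        apply Real.sqrt_lt_sqrt (sq_nonneg v)
        nlinarith
      have hnum : 0 < v + Real.sqrt (v ^ 2 + 4 * b * c) := by
        have := neg_abs_le v
        linarith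
      refine ⟨(v + Real.sqrt (v ^ 2 + 4 * b * c)) / (2 * b), ?_, ?_⟩
      · exact div_pos hnum (by linarith)
      · simp only [hφ]
        have h2b : (2*b) ≠ 0 := by positivity
        have hne : v + Real.sqrt (v ^ 2 + 4 * b * c) ≠ 0 := hnum.ne'
        field_simp
        rw [show v ^ 2 + b * 4 * c = v ^ 2 + 4 * b * c by ring, div_eq_iff hne]
        nlinarith [hsq]
    have key := integral_image_eq_integral_abs_deriv_smul measurableSet_Ioi hderiv hinj
      (fun v => Real.exp (-(v ^ 2) / 2))
    rw [himg] at key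
    rw [MeasureTheory.setIntegral_univ, gauss_univ] at key
    have hgauss_int : Integrable (fun v : ℝ => Real.exp (-(v ^ 2) / 2)) := by
      have h := integrable_exp_neg_mul_sq (by norm_num : (0:ℝ) < 1/2)
      exact h.congr (Filter.Eventually.of_forall fun v => by ring_nf)
    have hint : IntegrableOn (fun x => |φ' x| • Real.exp (-(φ x) ^ 2 / 2)) (Ioi 0) := by
      refine (integrableOn_image_iff_integrableOn_abs_deriv_smul measurableSet_Ioi hderiv hinj
        (fun v => Real.exp (-(v ^ 2) / 2))).mp ?_
      rw [himg]
      exact hgauss_int.integrableOn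
    set g1 : ℝ → ℝ := fun x => b * Real.exp (-(φ x) ^ 2 / 2) with hg1
    set g2 : ℝ → ℝ := fun x => (c / x ^ 2) * Real.exp (-(φ x) ^ 2 / 2) with hg2
    have hφcont : ContinuousOn φ (Ioi 0) := by
      apply ContinuousOn.sub (continuousOn_const.mul continuousOn_id)
      exact continuousOn_const.div continuousOn_id fun x hx => ne_of_gt hx
    have habs : ∀ x ∈ Ioi (0:ℝ), |φ' x| = b + c / x ^ 2 := by
      intro x hx
      have hx0 : (0:ℝ) < x := hx
      exact abs_of_pos (by positivity)
    have hg1m : AEStronglyMeasurable g1 (volume.restrict (Ioi 0)) := by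
      apply ContinuousOn.aestronglyMeasurable _ measurableSet_Ioi
      exact continuousOn_const.mul ((((hφcont.pow 2).neg).div_const 2).rexp)
    have hg2m : AEStronglyMeasurable g2 (volume.restrict (Ioi 0)) := by
      apply ContinuousOn.aestronglyMeasurable _ measurableSet_Ioi
      refine ContinuousOn.mul ?_ ((((hφcont.pow 2).neg).div_const 2).rexp)
      exact continuousOn_const.div (continuousOn_pow 2) fun x hx => by have : (0:ℝ) < x := hx; positivity
    have hg1i : IntegrableOn g1 (Ioi 0) := by
      apply hint.mono' hg1m
      rw [ae_restrict_iff' measurableSet_Ioi]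
      refine Filter.Eventually.of_forall fun x hx => ?_
      have hx0 : (0:ℝ) < x := hx
      rw [hg1, Real.norm_eq_abs, habs x hx, smul_eq_mul]
      rw [abs_of_pos (by positivity)]
      have : (0:ℝ) ≤ c / x ^ 2 := by positivity
      nlinarith [Real.exp_pos (-(φ x) ^ 2 / 2)]
    have hg2i : IntegrableOn g2 (Ioi 0) := by
      apply hint.mono' hg2m
      rw [ae_restrict_iff' measurableSet_Ioi]
      refine Filter.Eventually.of_forall fun x hx => ?_
      have hx0 : (0:ℝ) < x := hx
      rw [hg2, Real.norm_eq_abs, habs x hx, smul_eq_mul]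
      rw [abs_of_nonneg (by positivity)]
      nlinarith [Real.exp_pos (-(φ x) ^ 2 / 2), hb]
    have hsplit : ∫ x in Ioi (0:ℝ), |φ' x| • Real.exp (-(φ x) ^ 2 / 2)
        = (∫ x in Ioi (0:ℝ), g1 x) + ∫ x in Ioi (0:ℝ), g2 x := by
      rw [← integral_add hg1i hg2i]
      apply setIntegral_congr_fun measurableSet_Ioi
      intro x hx
      dsimp only
      rw [smul_eq_mul, habs x hx]
      ring
    -- second substitution: g2 integral equals g1 integral
    set ψ : ℝ → ℝ := fun x => c / (b * x) with hψ
    have hderiv2 : ∀ x ∈ Ioi (0:ℝ), HasDerivWithinAt ψ (-(c / b) / x ^ 2) (Ioi 0) x := by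
      intro x hx
      have hx0 : x ≠ 0 := ne_of_gt hx
      have h0 : HasDerivAt (fun u : ℝ => (c / b) * u⁻¹) ((c / b) * (-(x ^ 2)⁻¹)) x :=
        (hasDerivAt_inv hx0).const_mul (c / b)
      have h1 : HasDerivAt ψ (-(c / b) / x ^ 2) x := by
        rw [hψ]
        have heq : (fun x : ℝ => c / (b * x)) = fun u : ℝ => (c / b) * u⁻¹ := by
          ext u
          field_simp
        rw [heq]
        convert h0 using 1
        field_simp
      exact h1.hasDerivWithinAt
    have hinj2 : InjOn ψ (Ioi 0) := by
      intro x hx y hy hxy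
      simp only [hψ] at hxy
      have hx0 : (0:ℝ) < x := hx
      have hy0 : (0:ℝ) < y := hy
      field_simp at hxy
      linarith
    have himg2 : ψ '' Ioi 0 = Ioi 0 := by
      ext y
      simp only [mem_image, mem_Ioi, hψ]
      constructor
      · rintro ⟨x, hx, rfl⟩
        positivity
      · intro hy
        refine ⟨c / (b * y), by positivity, ?_⟩
        field_simp
    have key2 := integral_image_eq_integral_abs_deriv_smul measurableSet_Ioi hderiv2 hinj2 g2
    rw [himg2] at key2
    have key2' : ∫ x in Ioi (0:ℝ), g2 x = ∫ x in Ioi (0:ℝ), g1 x := by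
      rw [key2]
      apply setIntegral_congr_fun measurableSet_Ioi
      intro x hx
      have hx0 : (0:ℝ) < x := hx
      dsimp only
      rw [smul_eq_mul]
      have habs2 : |(-(c / b) / x ^ 2)| = c / (b * x ^ 2) := by
        rw [abs_div, abs_neg, abs_div, abs_of_pos hc0, abs_of_pos hb,
          abs_of_pos (by positivity : (0:ℝ) < x ^ 2)]
        field_simp
      rw [habs2]
      have hψx : ψ x = c / (b * x) := rfl
      have hφψ : φ (ψ x) = -(φ x) := by
        simp only [hφ, hψx, hφ]
        field_simp
        ring
      simp only [hg1, hg2]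
      rw [hφψ, neg_sq]
      simp only [hψ]
      field_simp
    have hJ1 : ∫ x in Ioi (0:ℝ), g1 x
        = b * ∫ u in Ioi (0:ℝ), Real.exp (-(b * u - c / u) ^ 2 / 2) := by
      rw [hg1, MeasureTheory.integral_const_mul]
    rw [hsplit, key2', hJ1] at key
    rw [eq_comm, div_eq_iff (by positivity : (2 * b) ≠ 0)]
    linarith

/-- The Laplace density as a scale mixture of centered Gaussians with
exponential mixing on the variance. -/
theorem laplace_scale_mixture (lam z : ℝ) (hlam : 0 < lam) :
    ∫ s in Set.Ioi (0 : ℝ),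
      (1 / Real.sqrt (2 * Real.pi * s)) * Real.exp (-(z ^ 2) / (2 * s)) *
        ((lam ^ 2 / 2) * Real.exp (-(lam ^ 2) * s / 2))
      = (lam / 2) * Real.exp (-(lam * |z|)) := by
  rw [← integral_comp_rpow_Ioi_of_pos (show (0:ℝ) < 2 by norm_num)]
  have hs : Real.sqrt (2 * π) ≠ 0 := ne_of_gt (Real.sqrt_pos.mpr (by positivity))
  have hstep : ∫ x in Ioi (0:ℝ), ((2:ℝ) * x ^ ((2:ℝ) - 1)) •
      ((1 / Real.sqrt (2 * Real.pi * x ^ (2:ℝ))) * Real.exp (-(z ^ 2) / (2 * x ^ (2:ℝ))) *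
        ((lam ^ 2 / 2) * Real.exp (-(lam ^ 2) * x ^ (2:ℝ) / 2)))
      = ∫ x in Ioi (0:ℝ),
        (lam ^ 2 / Real.sqrt (2 * π) * Real.exp (-(lam * |z|))) *
          Real.exp (-(lam * x - |z| / x) ^ 2 / 2) := by
    apply setIntegral_congr_fun measurableSet_Ioi
    intro x hx
    have hx0 : (0:ℝ) < x := hx
    dsimp only
    rw [smul_eq_mul]
    have hx2 : x ^ (2:ℝ) = x ^ 2 := by
      rw [← Real.rpow_natCast x 2]; norm_num
    rw [hx2, show ((2:ℝ) - 1) = (1:ℝ) by norm_num, Real.rpow_one,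
      Real.sqrt_mul (by positivity : (0:ℝ) ≤ 2 * π) (x ^ 2), Real.sqrt_sq hx0.le]
    have hexp : Real.exp (-(z ^ 2) / (2 * x ^ 2)) * Real.exp (-(lam ^ 2) * x ^ 2 / 2)
        = Real.exp (-(lam * |z|)) * Real.exp (-(lam * x - |z| / x) ^ 2 / 2) := by
      rw [← Real.exp_add, ← Real.exp_add]
      congr 1
      rw [← sq_abs z]
      field_simp
      ring
    have hre : (2 * x) * ((1 / (Real.sqrt (2 * π) * x)) * Real.exp (-(z ^ 2) / (2 * x ^ 2)) *
          ((lam ^ 2 / 2) * Real.exp (-(lam ^ 2) * x ^ 2 / 2)))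
        = (2 * x) * (1 / (Real.sqrt (2 * π) * x)) * (lam ^ 2 / 2) *
          (Real.exp (-(z ^ 2) / (2 * x ^ 2)) * Real.exp (-(lam ^ 2) * x ^ 2 / 2)) := by ring
    rw [hre, hexp]
    field_simp
  rw [hstep, MeasureTheory.integral_const_mul, Jval lam |z| hlam (abs_nonneg z)]
  field_simp
end

section
/- For any λ > 0 and any vector z ∈ ℝ^p, the integral over s ∈ (0,∞) of (2πs)^{−p/2} · exp(−‖z‖₂²/(2s)) · (λ²/2)^{(p+1)/2} · s^{(p+1)/2 − 1} · exp(−λ²s/2) / Γ((p+1)/2) ds is proportional to exp(−λ‖z‖₂); more precisely it equals C_p · λ^p · exp(−λ‖z‖₂) for a constant C_p depending only on p. In particular the multivariate group-lasso prior on z is a scale mixture of isotropic Gaussians with a Gamma((p+1)/2, λ²/2) mixing distribution on the variance parameter. -/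
open MeasureTheory Real Set

lemma glasser_integrable (α β : ℝ) (hβ : 0 < β) :
    IntegrableOn (fun t => Real.exp (-(β*t - α/t)^2)) (Ioi (0:ℝ)) := by
  have hmeas : AEStronglyMeasurable (fun t => Real.exp (-(β*t - α/t)^2))
      (volume.restrict (Ioi (0:ℝ))) := by
    apply ContinuousOn.aestronglyMeasurable _ measurableSet_Ioi
    apply Real.continuous_exp.comp_continuousOn
    apply ContinuousOn.neg
    apply ContinuousOn.pow
    exact (continuousOn_const.mul continuousOn_id).sub
      (continuousOn_const.div continuousOn_id (fun x hx => ne_of_gt hx))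
  have hint : Integrable (fun t : ℝ => Real.exp (2*α*β) * Real.exp (-β^2 * t^2)) :=
    (integrable_exp_neg_mul_sq (by positivity : (0:ℝ) < β^2)).const_mul _
  refine Integrable.mono' hint.integrableOn hmeas ?_
  rw [ae_restrict_iff' measurableSet_Ioi]
  filter_upwards with t ht
  rw [Real.norm_eq_abs, abs_of_pos (Real.exp_pos _), ← Real.exp_add]
  apply Real.exp_le_exp.2
  have ht0 : t ≠ 0 := ne_of_gt ht
  have hexp : (β*t - α/t)^2 = β^2*t^2 - 2*α*β + (α/t)^2 := by
    field_simp; ring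
  nlinarith [sq_nonneg (α/t)]

lemma glasser_mirror_aux (α β : ℝ) (hα : 0 < α) (hβ : 0 < β) :
    (fun t => α/(β*t)) '' Ioi (0:ℝ) = Ioi (0:ℝ) ∧
    (∀ t ∈ Ioi (0:ℝ),
      HasDerivWithinAt (fun t => α/(β*t)) (-(α/β)/t^2) (Ioi (0:ℝ)) t) ∧
    InjOn (fun t => α/(β*t)) (Ioi (0:ℝ)) := by
  refine ⟨?_, ?_, ?_⟩
  · ext u
    constructor
    · rintro ⟨t, ht, rfl⟩
      have ht' : (0:ℝ) < t := ht
      exact div_pos hα (by positivity)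
    · intro hu
      have hu' : (0:ℝ) < u := hu
      refine ⟨α/(β*u), mem_Ioi.mpr (by positivity), ?_⟩
      field_simp
  · intro t ht
    have h1 : HasDerivAt (fun t : ℝ => α/(β*t)) ((α/β) * (-(t^2)⁻¹)) t := by
      have := (hasDerivAt_inv (ne_of_gt (show (0:ℝ) < t from ht))).const_mul (α/β)
      have e : (fun t : ℝ => α/(β*t)) = fun y => α/β * y⁻¹ := by funext x; ring
      rw [e]; exact this
    have h2 : (α/β) * (-(t^2)⁻¹) = -(α/β)/t^2 := by field_simp
    exact (h2 ▸ h1).hasDerivWithinAt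
  · intro a ha b hb h
    simp only at h
    have ha0 : (0:ℝ) < a := ha
    have hb0 : (0:ℝ) < b := hb
    rw [div_eq_div_iff (by positivity) (by positivity)] at h
    have h2 := mul_left_cancel₀ (ne_of_gt hα) h
    exact (mul_left_cancel₀ (ne_of_gt hβ) h2).symm

lemma glasser_abs_deriv (α β : ℝ) (hα : 0 < α) (hβ : 0 < β) {t : ℝ} (ht : (0:ℝ) < t) :
    |(-(α/β)/t^2)| • Real.exp (-(β*(α/(β*t)) - α/(α/(β*t)))^2)
      = (α/(β*t^2)) * Real.exp (-(β*t - α/t)^2) := by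
  have ht0 : (t:ℝ) ≠ 0 := ne_of_gt ht
  simp only [smul_eq_mul]
  have h1 : |(-(α/β)/t^2)| = α/(β*t^2) := by
    rw [abs_div, abs_neg, abs_of_nonneg (by positivity : (0:ℝ) ≤ α/β),
      abs_of_nonneg (by positivity : (0:ℝ) ≤ t^2)]
    rw [div_div]
  rw [h1]
  congr 2
  have h2 : β*(α/(β*t)) - α/(α/(β*t)) = -(β*t - α/t) := by
    field_simp; ring
  rw [h2]; ring

lemma glasser_mirror (α β : ℝ) (hα : 0 < α) (hβ : 0 < β) :
    ∫ t in Ioi (0:ℝ), Real.exp (-(β*t - α/t)^2)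
      = ∫ t in Ioi (0:ℝ), (α/(β*t^2)) * Real.exp (-(β*t - α/t)^2) := by
  obtain ⟨himg, hderiv, hinj⟩ := glasser_mirror_aux α β hα hβ
  have key := integral_image_eq_integral_abs_deriv_smul measurableSet_Ioi hderiv hinj
    (fun u => Real.exp (-(β*u - α/u)^2))
  rw [himg] at key
  rw [key]
  exact setIntegral_congr_fun measurableSet_Ioi fun t ht => glasser_abs_deriv α β hα hβ ht

lemma glasser_mirror_integrable (α β : ℝ) (hα : 0 < α) (hβ : 0 < β) :
    IntegrableOn (fun t => (α/(β*t^2)) * Real.exp (-(β*t - α/t)^2)) (Ioi (0:ℝ)) := by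
  obtain ⟨himg, hderiv, hinj⟩ := glasser_mirror_aux α β hα hβ
  have key := (integrableOn_image_iff_integrableOn_abs_deriv_smul measurableSet_Ioi hderiv hinj
    (fun u => Real.exp (-(β*u - α/u)^2))).mp
  rw [himg] at key
  have h2 := key (glasser_integrable α β hβ)
  refine h2.congr_fun (fun t ht => ?_) measurableSet_Ioi
  exact glasser_abs_deriv α β hα hβ ht

lemma glasser_pos (α β : ℝ) (hα : 0 < α) (hβ : 0 < β) :
    ∫ t in Ioi (0:ℝ), Real.exp (-(β*t - α/t)^2) = Real.sqrt π / (2*β) := by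
  -- surjectivity image
  have himg : (fun t => β*t - α/t) '' Ioi (0:ℝ) = univ := by
    apply eq_univ_of_forall
    intro u
    set D := Real.sqrt (u^2 + 4*α*β) with hD
    have hD2 : D^2 = u^2 + 4*α*β := Real.sq_sqrt (by positivity)
    have hDabs : |u| < D := by
      nlinarith [Real.sqrt_nonneg (u^2 + 4*α*β), sq_abs u, abs_nonneg u]
    have ht : (0:ℝ) < (u + D)/(2*β) := by
      have := neg_abs_le u
      apply div_pos (by linarith) (by positivity)
    refine ⟨(u + D)/(2*β), mem_Ioi.mpr ht, ?_⟩
    simp only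
    have hud : u + D ≠ 0 := by
      have := neg_abs_le u
      intro h; nlinarith
    field_simp
    nlinarith [hD2]
  have hderiv : ∀ t ∈ Ioi (0:ℝ),
      HasDerivWithinAt (fun t => β*t - α/t) (β + α/t^2) (Ioi (0:ℝ)) t := by
    intro t ht
    have ht' : (0:ℝ) < t := ht
    have h1 : HasDerivAt (fun t : ℝ => β*t - α*t⁻¹) (β*1 - α * -(t^2)⁻¹) t :=
      ((hasDerivAt_id t).const_mul β).sub ((hasDerivAt_inv (ne_of_gt ht')).const_mul α)
    have h2 : β*1 - α * -(t^2)⁻¹ = β + α/t^2 := by field_simp; ring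
    have h3 : (fun t : ℝ => β*t - α*t⁻¹) = (fun t => β*t - α/t) := by
      funext x; rw [div_eq_mul_inv]
    rw [h2, h3] at h1
    exact h1.hasDerivWithinAt
  have hinj : InjOn (fun t => β*t - α/t) (Ioi (0:ℝ)) := by
    intro a ha b hb h
    simp only at h
    have ha0 : (0:ℝ) < a := ha
    have hb0 : (0:ℝ) < b := hb
    by_contra hne
    rcases lt_or_gt_of_ne hne with hl | hl
    · have h1 : α/b < α/a := div_lt_div_of_pos_left hα ha0 hl
      nlinarith
    · have h1 : α/a < α/b := div_lt_div_of_pos_left hα hb0 hl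
      nlinarith
  have key := integral_image_eq_integral_abs_deriv_smul measurableSet_Ioi hderiv hinj
    (fun u => Real.exp (-u^2))
  rw [himg] at key
  have hgauss : ∫ u in (univ : Set ℝ), Real.exp (-u^2) = Real.sqrt π := by
    rw [setIntegral_univ]
    have := integral_gaussian 1
    simpa using this
  rw [hgauss] at key
  -- rewrite RHS of key as sum
  have h_int := glasser_integrable α β hβ
  have h_int2 := glasser_mirror_integrable α β hα hβ
  have hsum : ∫ t in Ioi (0:ℝ), |β + α/t^2| • Real.exp (-((fun t => β*t - α/t) t)^2)
      = (∫ t in Ioi (0:ℝ), β * Real.exp (-(β*t - α/t)^2))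
        + ∫ t in Ioi (0:ℝ), β * ((α/(β*t^2)) * Real.exp (-(β*t - α/t)^2)) := by
    rw [← integral_add (h_int.const_mul β) (h_int2.const_mul β)]
    apply setIntegral_congr_fun measurableSet_Ioi
    intro t ht
    have ht' : (0:ℝ) < t := ht
    have ht0 : t ≠ 0 := ne_of_gt ht'
    simp only [smul_eq_mul]
    rw [abs_of_pos (by positivity : (0:ℝ) < β + α/t^2)]
    field_simp
  rw [hsum] at key
  rw [integral_const_mul, integral_const_mul, ← glasser_mirror α β hα hβ] at key
  have h2β : (2*β) ≠ 0 := by positivity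
  field_simp at key ⊢
  linarith

lemma glasser (α β : ℝ) (hα : 0 ≤ α) (hβ : 0 < β) :
    ∫ t in Ioi (0:ℝ), Real.exp (-(β*t - α/t)^2) = Real.sqrt π / (2*β) := by
  rcases eq_or_lt_of_le hα with h | h
  · subst h
    simp only [zero_div, sub_zero]
    have hfun : (fun t : ℝ => Real.exp (-(β*t)^2)) = fun t => Real.exp (-β^2*t^2) := by
      funext t; ring_nf
    rw [hfun, integral_gaussian_Ioi, Real.sqrt_div pi_pos.le,
      Real.sqrt_sq hβ.le, div_div, mul_comm]
  · exact glasser_pos α β h hβ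

-- key: ∫ s^{-1/2} e^{-a/s - b s}
lemma mixture_integral (a b : ℝ) (ha : 0 ≤ a) (hb : 0 < b) :
    ∫ s in Ioi (0:ℝ), s ^ (-(1:ℝ)/2) * Real.exp (-(a/s) - b*s)
      = Real.sqrt π / Real.sqrt b * Real.exp (-(2 * Real.sqrt (a*b))) := by
  have himg : (fun t : ℝ => t^2) '' Ioi (0:ℝ) = Ioi (0:ℝ) := by
    ext u
    constructor
    · rintro ⟨t, ht, rfl⟩
      have ht' : (0:ℝ) < t := ht
      exact mem_Ioi.mpr (by positivity)
    · intro hu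
      have hu' : (0:ℝ) < u := hu
      exact ⟨Real.sqrt u, mem_Ioi.mpr (Real.sqrt_pos.mpr hu'), Real.sq_sqrt hu'.le⟩
  have hderiv : ∀ t ∈ Ioi (0:ℝ),
      HasDerivWithinAt (fun t : ℝ => t^2) (2*t) (Ioi (0:ℝ)) t := by
    intro t ht
    simpa using (hasDerivAt_pow 2 t).hasDerivWithinAt
  have hinj : InjOn (fun t : ℝ => t^2) (Ioi (0:ℝ)) := by
    intro x hx y hy h
    simp only at h
    rw [← Real.sqrt_sq (le_of_lt hx), ← Real.sqrt_sq (le_of_lt hy), h]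
  have key := integral_image_eq_integral_abs_deriv_smul measurableSet_Ioi hderiv hinj
    (fun s => s ^ (-(1:ℝ)/2) * Real.exp (-(a/s) - b*s))
  rw [himg] at key
  rw [key]
  have hcongr : ∀ t ∈ Ioi (0:ℝ),
      |2*t| • ((t^2) ^ (-(1:ℝ)/2) * Real.exp (-(a/t^2) - b*t^2))
        = (2 * Real.exp (-(2 * Real.sqrt (a*b)))) *
            Real.exp (-(Real.sqrt b * t - Real.sqrt a / t)^2) := by
    intro t ht
    have ht' : (0:ℝ) < t := ht
    have ht0 : t ≠ 0 := ne_of_gt ht'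
    have h1 : |2*t| = 2*t := abs_of_pos (by positivity)
    have h2 : (t^2 : ℝ) ^ (-(1:ℝ)/2) = t⁻¹ := by
      rw [show (-(1:ℝ)/2) = -(1/2) by ring, Real.rpow_neg (by positivity),
        ← Real.sqrt_eq_rpow, Real.sqrt_sq ht'.le]
    have h3 : -(a/t^2) - b*t^2 = -(Real.sqrt b * t - Real.sqrt a / t)^2
        - 2 * Real.sqrt (a*b) := by
      have hsa : Real.sqrt a ^ 2 = a := Real.sq_sqrt ha
      have hsb : Real.sqrt b ^ 2 = b := Real.sq_sqrt hb.le
      have hab : Real.sqrt a * Real.sqrt b = Real.sqrt (a*b) :=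
        (Real.sqrt_mul ha b).symm
      field_simp
      linear_combination t^4 * hsb + hsa + (-2*t^2) * hab
    rw [smul_eq_mul, h1, h2, h3, Real.exp_sub, div_eq_mul_inv, ← Real.exp_neg]
    field_simp
  rw [setIntegral_congr_fun measurableSet_Ioi hcongr, integral_const_mul,
    glasser (Real.sqrt a) (Real.sqrt b) (Real.sqrt_nonneg a) (Real.sqrt_pos.mpr hb)]
  field_simp

/-- The multivariate group-lasso prior is a scale mixture of isotropic Gaussians
with a Gamma((p+1)/2, λ²/2) mixing distribution on the variance. -/
theorem group_lasso_scale_mixture (p : ℕ) :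
    ∃ C : ℝ, 0 < C ∧ ∀ lam : ℝ, 0 < lam → ∀ z : EuclideanSpace ℝ (Fin p),
      ∫ s in Set.Ioi (0 : ℝ),
          (2 * Real.pi * s) ^ (-(p : ℝ) / 2) * Real.exp (-(‖z‖ ^ 2) / (2 * s)) *
            ((lam ^ 2 / 2) ^ (((p : ℝ) + 1) / 2) * s ^ (((p : ℝ) + 1) / 2 - 1) *
              Real.exp (-(lam ^ 2) * s / 2) / Real.Gamma (((p : ℝ) + 1) / 2))
        = C * lam ^ p * Real.exp (-(lam * ‖z‖)) := by
  have hΓ : 0 < Real.Gamma (((p:ℝ)+1)/2) := Real.Gamma_pos_of_pos (by positivity)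
  refine ⟨Real.sqrt (2*π) * (2*π) ^ (-(p:ℝ)/2) * 2 ^ (-(((p:ℝ)+1)/2))
      / Real.Gamma (((p:ℝ)+1)/2), ?_, ?_⟩
  · apply div_pos _ hΓ
    have h2π : (0:ℝ) < 2*π := by positivity
    positivity
  intro lam hlam z
  set r := ‖z‖ with hr
  have hr0 : 0 ≤ r := norm_nonneg z
  set K := (2*Real.pi) ^ (-(p:ℝ)/2) * (lam^2/2) ^ (((p:ℝ)+1)/2)
      / Real.Gamma (((p:ℝ)+1)/2) with hK
  have hstep : ∫ s in Set.Ioi (0:ℝ),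
        (2 * Real.pi * s) ^ (-(p : ℝ) / 2) * Real.exp (-(r ^ 2) / (2 * s)) *
          ((lam ^ 2 / 2) ^ (((p : ℝ) + 1) / 2) * s ^ (((p : ℝ) + 1) / 2 - 1) *
            Real.exp (-(lam ^ 2) * s / 2) / Real.Gamma (((p : ℝ) + 1) / 2))
      = ∫ s in Set.Ioi (0:ℝ),
          K * (s ^ (-(1:ℝ)/2) * Real.exp (-((r^2/2)/s) - (lam^2/2)*s)) := by
    apply setIntegral_congr_fun measurableSet_Ioi
    intro s hs
    have hs' : (0:ℝ) < s := hs
    have e1 : (2*Real.pi*s) ^ (-(p:ℝ)/2)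
        = (2*Real.pi) ^ (-(p:ℝ)/2) * s ^ (-(p:ℝ)/2) :=
      Real.mul_rpow (by positivity) hs'.le
    have e2 : s ^ (-(1:ℝ)/2) = s ^ (-(p:ℝ)/2) * s ^ (((p:ℝ)+1)/2 - 1) := by
      rw [← Real.rpow_add hs']
      congr 1
      ring
    have e3 : Real.exp (-((r^2/2)/s) - (lam^2/2)*s)
        = Real.exp (-(r^2)/(2*s)) * Real.exp (-(lam^2)*s/2) := by
      rw [← Real.exp_add]
      congr 1
      field_simp
      ring
    simp only [hK, e1, e2, e3]
    ring
  rw [hstep, integral_const_mul,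
    mixture_integral (r^2/2) (lam^2/2) (by positivity) (by positivity)]
  have hab : Real.sqrt (r^2/2 * (lam^2/2)) = r*lam/2 := by
    rw [show r^2/2 * (lam^2/2) = (r*lam/2)^2 by ring]
    exact Real.sqrt_sq (by positivity)
  have hb : Real.sqrt (lam^2/2) = lam / Real.sqrt 2 := by
    rw [Real.sqrt_div (sq_nonneg lam), Real.sqrt_sq hlam.le]
  have h2exp : 2 * (r*lam/2) = lam * r := by ring
  rw [hab, hb, h2exp]
  have hlamB : (lam^2/2) ^ (((p:ℝ)+1)/2)
      = lam ^ p * lam * 2 ^ (-(((p:ℝ)+1)/2)) := by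
    rw [Real.div_rpow (sq_nonneg lam) (by norm_num : (0:ℝ) ≤ 2),
      Real.rpow_neg (by norm_num : (0:ℝ) ≤ 2), div_eq_mul_inv]
    congr 1
    rw [← Real.rpow_natCast lam 2, ← Real.rpow_mul hlam.le,
      show ((2:ℕ):ℝ) * (((p:ℝ)+1)/2) = ((p+1 : ℕ):ℝ) by push_cast; ring,
      Real.rpow_natCast, pow_succ]
  have hsqrt2π : Real.sqrt (2*π) = Real.sqrt 2 * Real.sqrt π :=
    Real.sqrt_mul (by norm_num) π
  rw [hK, hlamB]
  have h2 : Real.sqrt 2 ≠ 0 := by positivity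
  have hπ : Real.sqrt π ≠ 0 := by positivity
  field_simp [hsqrt2π]
  ring
  rw [mul_comm π 2, hsqrt2π, mul_comm]
end

section
/- Under the change of variables (ω₁₂, ω₂₂) → (ω₁₂, θ) with θ = ω₂₂ − ω₂₁ Ω₁₁^{−1} ω₁₂ and Ω₁₁ held fixed, the Jacobian determinant of the transformation is 1, and the Gaussian-likelihood-plus-exponential-prior kernel θ^{n/2} exp(−((s₂₂+λ₀)/2)(θ + ω₂₁Ω₁₁^{−1}ω₁₂) − s₁₂ᵀω₁₂ − (1/2)ω₁₂ᵀ T ω₁₂) factorizes as a product of a function of θ alone (a Gamma(n/2 + 1, (s₂₂+λ₀)/2) kernel) and a function of ω₁₂ alone (a Gaussian kernel with precision A = T + (λ₀+s₂₂)Ω₁₁^{−1} and mean −A^{−1}s₁₂). -/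
open Matrix

lemma det_shear_aux {p : ℕ} (L : (Fin p → ℝ) →ₗ[ℝ] ℝ) :
    LinearMap.det (LinearMap.prod (LinearMap.fst ℝ (Fin p → ℝ) ℝ)
      (LinearMap.snd ℝ (Fin p → ℝ) ℝ - L.comp (LinearMap.fst ℝ (Fin p → ℝ) ℝ))) = 1 := by
  set M := LinearMap.prod (LinearMap.fst ℝ (Fin p → ℝ) ℝ)
      (LinearMap.snd ℝ (Fin p → ℝ) ℝ - L.comp (LinearMap.fst ℝ (Fin p → ℝ) ℝ)) with hM
  let b := (Pi.basisFun ℝ (Fin p)).prod (Module.Basis.singleton Unit ℝ)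
  rw [← LinearMap.det_toMatrix b]
  have : LinearMap.toMatrix b b M =
      Matrix.fromBlocks 1 0 (Matrix.of fun _ j => -(L (Pi.single j 1))) 1 := by
    ext i j
    rcases i with i | i <;> rcases j with j | j <;>
      simp [LinearMap.toMatrix_apply, b, Module.Basis.prod_repr_inl, Module.Basis.prod_repr_inr, hM,
        Matrix.fromBlocks, Matrix.one_apply, Pi.basisFun_apply, Pi.single_apply, eq_comm]
  rw [this, Matrix.det_fromBlocks_zero₁₂]
  simp

/-- The change of variables `(ω₁₂, ω₂₂) ↦ (ω₁₂, θ)` with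
`θ = ω₂₂ - ω₁₂ᵀ Ω₁₁⁻¹ ω₁₂` has unit Jacobian determinant, and the
likelihood-times-prior kernel factorizes into a Gamma(n/2 + 1, (s₂₂+λ₀)/2)
kernel in `θ` and a Gaussian kernel in `ω₁₂` with precision
`A = T + (λ₀+s₂₂) Ω₁₁⁻¹` and mean `-A⁻¹ s₁₂`. -/
theorem block_gibbs_factorization {p : ℕ}
    (Ω₁₁ : Matrix (Fin p) (Fin p) ℝ) (hΩ₁₁ : Ω₁₁.PosDef)
    (T : Matrix (Fin p) (Fin p) ℝ) (hT : T.PosSemidef)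
    (n s₂₂ lam₀ : ℝ) (hn : 0 < n) (hs : 0 < s₂₂ + lam₀)
    (s₁₂ : Fin p → ℝ)
    (F : (Fin p → ℝ) × ℝ → (Fin p → ℝ) × ℝ)
    (hF : ∀ x, F x = (x.1, x.2 - x.1 ⬝ᵥ (Ω₁₁⁻¹ *ᵥ x.1)))
    (A : Matrix (Fin p) (Fin p) ℝ) (hA : A = T + (lam₀ + s₂₂) • Ω₁₁⁻¹) :
    (∀ x, (fderiv ℝ F x).det = 1)
    ∧ (∀ θ : ℝ, 0 < θ → ∀ ω : Fin p → ℝ,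
        θ ^ (n / 2) *
          Real.exp (-((s₂₂ + lam₀) / 2) * (θ + ω ⬝ᵥ (Ω₁₁⁻¹ *ᵥ ω))
            - s₁₂ ⬝ᵥ ω - (1 / 2) * (ω ⬝ᵥ (T *ᵥ ω)))
        = (θ ^ (n / 2) * Real.exp (-((s₂₂ + lam₀) / 2) * θ))
          * (Real.exp (-(1 / 2) *
                ((ω + A⁻¹ *ᵥ s₁₂) ⬝ᵥ (A *ᵥ (ω + A⁻¹ *ᵥ s₁₂))))
              * Real.exp ((1 / 2) * (s₁₂ ⬝ᵥ (A⁻¹ *ᵥ s₁₂))))) := by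
  constructor
  · -- Jacobian part
    have hq : Differentiable ℝ (fun v : Fin p → ℝ => v ⬝ᵥ (Ω₁₁⁻¹ *ᵥ v)) := by
      simp only [dotProduct, mulVec]; fun_prop
    intro x
    set L := fderiv ℝ (fun v : Fin p → ℝ => v ⬝ᵥ (Ω₁₁⁻¹ *ᵥ v)) x.1 with hL
    have hFd : HasFDerivAt F
        ((ContinuousLinearMap.fst ℝ (Fin p → ℝ) ℝ).prod
          ((ContinuousLinearMap.snd ℝ (Fin p → ℝ) ℝ) -
            L.comp (ContinuousLinearMap.fst ℝ (Fin p → ℝ) ℝ))) x := by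
      have : F = fun x : (Fin p → ℝ) × ℝ => (x.1, x.2 - x.1 ⬝ᵥ (Ω₁₁⁻¹ *ᵥ x.1)) := funext hF
      rw [this]
      exact HasFDerivAt.prodMk hasFDerivAt_fst
        (HasFDerivAt.sub hasFDerivAt_snd (HasFDerivAt.comp (g := fun v : Fin p → ℝ => v ⬝ᵥ (Ω₁₁⁻¹ *ᵥ v)) x ((hq x.1).hasFDerivAt) hasFDerivAt_fst))
    rw [hFd.fderiv]
    show LinearMap.det _ = 1
    have hcoe : (((ContinuousLinearMap.fst ℝ (Fin p → ℝ) ℝ).prod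
          ((ContinuousLinearMap.snd ℝ (Fin p → ℝ) ℝ) -
            L.comp (ContinuousLinearMap.fst ℝ (Fin p → ℝ) ℝ))) :
          (Fin p → ℝ) × ℝ →ₗ[ℝ] (Fin p → ℝ) × ℝ) =
        LinearMap.prod (LinearMap.fst ℝ (Fin p → ℝ) ℝ)
          (LinearMap.snd ℝ (Fin p → ℝ) ℝ - (L : (Fin p → ℝ) →ₗ[ℝ] ℝ).comp
            (LinearMap.fst ℝ (Fin p → ℝ) ℝ)) := by
      ext y <;> simp
    rw [hcoe]
    exact det_shear_aux _
  · -- factorization part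
    have hsm : ((lam₀ + s₂₂) • Ω₁₁⁻¹).PosDef := by
      have hi := hΩ₁₁.inv
      refine posDef_iff_dotProduct_mulVec.mpr ⟨?_, fun x hx => ?_⟩
      · unfold Matrix.IsHermitian
        rw [conjTranspose_smul, hi.1.eq]
        simp
      · rw [smul_mulVec, dotProduct_smul, smul_eq_mul]
        exact mul_pos (by linarith) (hi.dotProduct_mulVec_pos hx)
    have hApos : A.PosDef := hA ▸ Matrix.PosDef.posSemidef_add hT hsm
    have hAunit : IsUnit A.det := hApos.det_pos.ne'.isUnit
    have hAinv : A * A⁻¹ = 1 := Matrix.mul_nonsing_inv A hAunit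
    set μ := A⁻¹ *ᵥ s₁₂ with hμ
    have hAs : A *ᵥ μ = s₁₂ := by
      rw [hμ, mulVec_mulVec, hAinv, one_mulVec]
    have hsym : ∀ x y : Fin p → ℝ, x ⬝ᵥ (A *ᵥ y) = (A *ᵥ x) ⬝ᵥ y := by
      intro x y
      have hAT : Aᵀ = A := by
        have := hApos.isHermitian.eq
        simpa [Matrix.conjTranspose, Matrix.map, Matrix.transpose] using this
      rw [dotProduct_mulVec, ← mulVec_transpose, hAT]
    have f1 : ∀ ω : Fin p → ℝ, ω ⬝ᵥ (A *ᵥ ω)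
        = ω ⬝ᵥ (T *ᵥ ω) + (lam₀ + s₂₂) * (ω ⬝ᵥ (Ω₁₁⁻¹ *ᵥ ω)) := by
      intro ω
      rw [hA, add_mulVec, dotProduct_add, smul_mulVec, dotProduct_smul, smul_eq_mul]
    intro θ hθ ω
    have f2 : ω ⬝ᵥ (A *ᵥ μ) = s₁₂ ⬝ᵥ ω := by rw [hAs, dotProduct_comm]
    have f3 : μ ⬝ᵥ (A *ᵥ ω) = s₁₂ ⬝ᵥ ω := by rw [hsym, hAs]
    have f4 : μ ⬝ᵥ (A *ᵥ μ) = s₁₂ ⬝ᵥ μ := by rw [hsym, hAs]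
    have hE : (ω + μ) ⬝ᵥ (A *ᵥ (ω + μ))
        = ω ⬝ᵥ (T *ᵥ ω) + (lam₀ + s₂₂) * (ω ⬝ᵥ (Ω₁₁⁻¹ *ᵥ ω))
          + 2 * (s₁₂ ⬝ᵥ ω) + s₁₂ ⬝ᵥ μ := by
      rw [mulVec_add, dotProduct_add, add_dotProduct, add_dotProduct, f2, f3, f4, f1]
      ring
    rw [mul_assoc, ← Real.exp_add, ← Real.exp_add, hE]
    congr 1
    ring
end
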